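/- Let r ≥ 1 be an integer and let b, d, e be real numbers with b > 0, e ≥ 0, d ≥ 0, and d > 0 if r > 1. Set ρ_j := (r−j)d/2 + e/2 + b/4 for 1 ≤ j ≤ r, p := (e+1)+(r−1)d+b/2, and n := r(p+b/2). Then ((2ρ_1)(2ρ_1+1))/((2ρ_1+b/2+1)(2ρ_1+b/2+e)) · ∏_{j=2}^r ((ρ_1−ρ_j)(ρ_1+ρ_j))/((ρ_1−ρ_j+d/2)(ρ_1+ρ_j+d/2)) = p/(2n). -/
import Mathlib
set_option maxHeartbeats 1000000


open Finset

lemma telescope_prod (r : ℕ) (hr : 1 ≤ r) (X C : ℝ) (hX : 0 ≤ X)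
    (hX1 : 1 < r → 0 < X) (hC : 0 < C - ((r : ℝ) + 1) * X) :
    ∏ j ∈ Finset.Icc 2 r,
      ((((j : ℝ) - 1) * X) * (C - ((j : ℝ) + 1) * X)) /
        (((j : ℝ) * X) * (C - (j : ℝ) * X))
      = (C - ((r : ℝ) + 1) * X) / ((r : ℝ) * (C - 2 * X)) := by
  induction r with
  | zero => omega
  | succ n ih =>
    push_cast at hC ⊢
    rcases Nat.lt_or_ge n 1 with hn | hn
    · interval_cases n
      have h2 : C - 2 * X ≠ 0 := by nlinarith
      norm_num
      rw [div_self h2]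
    · have hX' : 0 < X := hX1 (by omega)
      have ih' := ih hn (fun _ => hX') (by push_cast; nlinarith [hC, hX'])
      rw [Finset.prod_Icc_succ_top (by omega), ih']
      have hn1 : (1 : ℝ) ≤ (n : ℝ) := by exact_mod_cast hn
      have h1 : C - ((n : ℝ) + 1) * X ≠ 0 := by nlinarith
      have h2 : C - 2 * X ≠ 0 := by nlinarith
      have h3 : (n : ℝ) ≠ 0 := by positivity
      have h4 : (n : ℝ) + 1 ≠ 0 := by positivity
      push_cast
      field_simp
      ring

lemma finstep (t b e R : ℝ) (ht : t ≠ 0) (h1 : t + b / 2 + 1 ≠ 0)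
    (h2 : t + b / 2 + e ≠ 0) (hR : R ≠ 0) :
    t * (t + 1) / ((t + b / 2 + 1) * (t + b / 2 + e)) * (((t + b / 2 + e) / 2) / (R * t))
      = (t + 1) / (2 * (R * ((t + 1) + b / 2))) := by
  have h1' : (t + 1) + b / 2 ≠ 0 := fun h => h1 (by linarith)
  rw [div_mul_div_comm, div_eq_div_iff
    (mul_ne_zero (mul_ne_zero h1 h2) (mul_ne_zero hR ht))
    (by exact mul_ne_zero two_ne_zero (mul_ne_zero hR h1'))]
  ring

theorem c_function_quotient_eval (r : ℕ) (hr : 1 ≤ r) (b d e : ℝ)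
    (hb : 0 < b) (he : 0 ≤ e) (hd0 : 0 ≤ d) (hd : 1 < r → 0 < d) :
    (2 * (((r : ℝ) - 1) * d / 2 + e / 2 + b / 4)) *
        (2 * (((r : ℝ) - 1) * d / 2 + e / 2 + b / 4) + 1) /
        ((2 * (((r : ℝ) - 1) * d / 2 + e / 2 + b / 4) + b / 2 + 1) *
          (2 * (((r : ℝ) - 1) * d / 2 + e / 2 + b / 4) + b / 2 + e)) *
      ∏ j ∈ Finset.Icc 2 r,
        (((((r : ℝ) - 1) * d / 2 + e / 2 + b / 4) -
              (((r : ℝ) - (j : ℝ)) * d / 2 + e / 2 + b / 4)) *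
            ((((r : ℝ) - 1) * d / 2 + e / 2 + b / 4) +
              (((r : ℝ) - (j : ℝ)) * d / 2 + e / 2 + b / 4))) /
          (((((r : ℝ) - 1) * d / 2 + e / 2 + b / 4) -
              (((r : ℝ) - (j : ℝ)) * d / 2 + e / 2 + b / 4) + d / 2) *
            ((((r : ℝ) - 1) * d / 2 + e / 2 + b / 4) +
              (((r : ℝ) - (j : ℝ)) * d / 2 + e / 2 + b / 4) + d / 2))
      = ((e + 1) + ((r : ℝ) - 1) * d + b / 2) /
          (2 * ((r : ℝ) * (((e + 1) + ((r : ℝ) - 1) * d + b / 2) + b / 2))) := by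
  set X : ℝ := d / 2 with hXdef
  set C : ℝ := (r : ℝ) * d + e + b / 2 with hCdef
  have hrR : (1 : ℝ) ≤ (r : ℝ) := by exact_mod_cast hr
  have hC : 0 < C - ((r : ℝ) + 1) * X := by
    have : C - ((r : ℝ) + 1) * X = ((r : ℝ) - 1) * d / 2 + e + b / 2 := by
      rw [hXdef, hCdef]; ring
    rw [this]; nlinarith
  have hprod := telescope_prod r hr X C (by positivity) (fun h => by
      have := hd h; positivity) hC
  have hcongr : ∏ j ∈ Finset.Icc 2 r,
        (((((r : ℝ) - 1) * d / 2 + e / 2 + b / 4) -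
              (((r : ℝ) - (j : ℝ)) * d / 2 + e / 2 + b / 4)) *
            ((((r : ℝ) - 1) * d / 2 + e / 2 + b / 4) +
              (((r : ℝ) - (j : ℝ)) * d / 2 + e / 2 + b / 4))) /
          (((((r : ℝ) - 1) * d / 2 + e / 2 + b / 4) -
              (((r : ℝ) - (j : ℝ)) * d / 2 + e / 2 + b / 4) + d / 2) *
            ((((r : ℝ) - 1) * d / 2 + e / 2 + b / 4) +
              (((r : ℝ) - (j : ℝ)) * d / 2 + e / 2 + b / 4) + d / 2))
      = ∏ j ∈ Finset.Icc 2 r,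
      ((((j : ℝ) - 1) * X) * (C - ((j : ℝ) + 1) * X)) /
        (((j : ℝ) * X) * (C - (j : ℝ) * X)) := by
    refine Finset.prod_congr rfl fun j hj => ?_
    rw [hXdef, hCdef]; ring_nf
  rw [hcongr, hprod]
  have hrd : 0 ≤ ((r : ℝ) - 1) * d := by nlinarith
  have ht : 2 * (((r : ℝ) - 1) * d / 2 + e / 2 + b / 4) ≠ 0 := by nlinarith
  have h1 : 2 * (((r : ℝ) - 1) * d / 2 + e / 2 + b / 4) + b / 2 + 1 ≠ 0 := by nlinarith
  have h2 : 2 * (((r : ℝ) - 1) * d / 2 + e / 2 + b / 4) + b / 2 + e ≠ 0 := by nlinarith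
  have hR : (r : ℝ) ≠ 0 := by positivity
  have hfin : (C - ((r : ℝ) + 1) * X) / ((r : ℝ) * (C - 2 * X))
      = ((2 * (((r : ℝ) - 1) * d / 2 + e / 2 + b / 4) + b / 2 + e) / 2) /
        ((r : ℝ) * (2 * (((r : ℝ) - 1) * d / 2 + e / 2 + b / 4))) := by
    rw [show C - ((r : ℝ) + 1) * X
          = (2 * (((r : ℝ) - 1) * d / 2 + e / 2 + b / 4) + b / 2 + e) / 2 by
        rw [hXdef, hCdef]; ring,
      show (r : ℝ) * (C - 2 * X)
          = (r : ℝ) * (2 * (((r : ℝ) - 1) * d / 2 + e / 2 + b / 4)) by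
        rw [hXdef, hCdef]; ring]
  rw [hfin, finstep (2 * (((r : ℝ) - 1) * d / 2 + e / 2 + b / 4)) b e (r : ℝ) ht h1 h2 hR]
  ring
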